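/- For ξ ~ Binomial(3,p) and the p.g.f. G(s) = (3p^3/32)s^3 + (2p^2/3 − 37p^3/96)s^2 + (13p^3/24 − 5p^2/3 + 3p/2)s + (−p^3/4 + p^2 − 3p/2 + 1), the inequality G'(1)·G''(s) − G'(s)·G''(1) ≥ 0 holds for all s ∈ [0,1] and all p ∈ [0,1], and is implied by 335p^2 − 3424p + 4304 > 0, which holds for all p ∈ [0,1]. -/

import Mathlib

/-- The p.g.f. of the offspring law of the branching process associated to the
Maki–Thompson model on a Galton–Watson tree with `Binomial(3,p)` offspring. -/
noncomputable def Gb3 (p s : ℝ) : ℝ :=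
  (3 * p ^ 3 / 32) * s ^ 3 + (2 * p ^ 2 / 3 - 37 * p ^ 3 / 96) * s ^ 2 +
    (13 * p ^ 3 / 24 - 5 * p ^ 2 / 3 + 3 * p / 2) * s + (-p ^ 3 / 4 + p ^ 2 - 3 * p / 2 + 1)

lemma Gb3_deriv (p s : ℝ) :
    deriv (Gb3 p) s = (3 * p ^ 3 / 32) * (3 * s ^ 2) +
      (2 * p ^ 2 / 3 - 37 * p ^ 3 / 96) * (2 * s) +
      (13 * p ^ 3 / 24 - 5 * p ^ 2 / 3 + 3 * p / 2) := by
  have h : HasDerivAt (Gb3 p)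
      ((3 * p ^ 3 / 32) * (3 * s ^ 2) + (2 * p ^ 2 / 3 - 37 * p ^ 3 / 96) * (2 * s) +
        (13 * p ^ 3 / 24 - 5 * p ^ 2 / 3 + 3 * p / 2)) s := by
    have h1 := (hasDerivAt_pow 3 s).const_mul (3 * p ^ 3 / 32)
    have h2 := (hasDerivAt_pow 2 s).const_mul (2 * p ^ 2 / 3 - 37 * p ^ 3 / 96)
    have h3 := (hasDerivAt_id s).const_mul (13 * p ^ 3 / 24 - 5 * p ^ 2 / 3 + 3 * p / 2)
    have := ((h1.add h2).add h3).add_const (-p ^ 3 / 4 + p ^ 2 - 3 * p / 2 + 1)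
    unfold Gb3
    exact this.congr_deriv (by push_cast; ring)
  exact h.deriv

lemma Gb3_deriv2 (p s : ℝ) :
    deriv (deriv (Gb3 p)) s = (3 * p ^ 3 / 32) * (6 * s) +
      (2 * p ^ 2 / 3 - 37 * p ^ 3 / 96) * 2 := by
  have heq : deriv (Gb3 p) = fun s =>
      (3 * p ^ 3 / 32) * (3 * s ^ 2) + (2 * p ^ 2 / 3 - 37 * p ^ 3 / 96) * (2 * s) +
      (13 * p ^ 3 / 24 - 5 * p ^ 2 / 3 + 3 * p / 2) := funext fun s => Gb3_deriv p s
  rw [heq]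
  have h : HasDerivAt (fun s : ℝ =>
      (3 * p ^ 3 / 32) * (3 * s ^ 2) + (2 * p ^ 2 / 3 - 37 * p ^ 3 / 96) * (2 * s) +
      (13 * p ^ 3 / 24 - 5 * p ^ 2 / 3 + 3 * p / 2))
      ((3 * p ^ 3 / 32) * (6 * s) + (2 * p ^ 2 / 3 - 37 * p ^ 3 / 96) * 2) s := by
    have h1 := ((hasDerivAt_pow 2 s).const_mul (3 : ℝ)).const_mul (3 * p ^ 3 / 32)
    have h2 := ((hasDerivAt_id s).const_mul (2 : ℝ)).const_mul (2 * p ^ 2 / 3 - 37 * p ^ 3 / 96)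
    have := (h1.add h2).add_const (13 * p ^ 3 / 24 - 5 * p ^ 2 / 3 + 3 * p / 2)
    exact this.congr_deriv (by push_cast; ring)
  exact h.deriv

theorem stmt17 :
    (∀ p ∈ Set.Icc (0 : ℝ) 1, 0 < 335 * p ^ 2 - 3424 * p + 4304) ∧
      (∀ p ∈ Set.Icc (0 : ℝ) 1, ∀ s ∈ Set.Icc (0 : ℝ) 1,
        0 < 335 * p ^ 2 - 3424 * p + 4304 →
          0 ≤ deriv (Gb3 p) 1 * deriv (deriv (Gb3 p)) s - deriv (Gb3 p) s * deriv (deriv (Gb3 p)) 1) ∧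
      ∀ p ∈ Set.Icc (0 : ℝ) 1, ∀ s ∈ Set.Icc (0 : ℝ) 1,
        0 ≤ deriv (Gb3 p) 1 * deriv (deriv (Gb3 p)) s - deriv (Gb3 p) s * deriv (deriv (Gb3 p)) 1 := by
  have hq : ∀ p ∈ Set.Icc (0 : ℝ) 1, 0 < 335 * p ^ 2 - 3424 * p + 4304 := by
    rintro p ⟨hp0, hp1⟩
    nlinarith [sq_nonneg p, sq_nonneg (1 - p)]
  have key : ∀ p ∈ Set.Icc (0 : ℝ) 1, ∀ s ∈ Set.Icc (0 : ℝ) 1,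
      0 ≤ deriv (Gb3 p) 1 * deriv (deriv (Gb3 p)) s - deriv (Gb3 p) s * deriv (deriv (Gb3 p)) 1 := by
    rintro p ⟨hp0, hp1⟩ s ⟨hs0, hs1⟩
    rw [Gb3_deriv, Gb3_deriv, Gb3_deriv2, Gb3_deriv2]
    have hs1' : 0 ≤ 1 - s := by linarith
    have hp5 : 0 ≤ p ^ 5 := by positivity
    have hp4 : 0 ≤ p ^ 4 := by positivity
    have hA : 0 ≤ (1 - s) * s * (p ^ 5 * (96 - 15 * p)) :=
      mul_nonneg (mul_nonneg hs1' hs0) (mul_nonneg hp5 (by linarith))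
    have hB : 0 ≤ (1 - s) * (p ^ 4 * (335 * p ^ 2 - 3424 * p + 4304)) :=
      mul_nonneg hs1' (mul_nonneg hp4 (le_of_lt (hq p ⟨hp0, hp1⟩)))
    nlinarith [hA, hB]
  exact ⟨hq, fun p hp s hs _ => key p hp s hs, key⟩
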